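/- Let $u:\mathbb{R}\to\mathbb{R}$ be absolutely continuous with $u'\in L^2(\mathbb{R})$ and let $u_{\Delta x}$ be the piecewise linear projection defined on each double cell $[x_{2j},x_{2j+2}]$ by $u_{\Delta x}(x)=u(x_{2j})+(Du_{2j}\mp q_{2j})(x-x_{2j})$ for $x\in[x_{2j},x_{2j+1}]$ and $u_{\Delta x}(x)=u(x_{2j+2})+(Du_{2j}\pm q_{2j})(x-x_{2j+2})$ for $x\in[x_{2j+1},x_{2j+2}]$, where $Du_{2j}=\frac{u(x_{2j+2})-u(x_{2j})}{2\Delta x}$ and $q_{2j}=\sqrt{\frac{1}{2\Delta x}\int_{x_{2j}}^{x_{2j+2}}u'(z)^2dz-(Du_{2j})^2}$. Then $\|u-u_{\Delta x}\|_{L^\infty(\mathbb{R})}\leq(1+\sqrt{2})\sqrt{F_{\mathrm{ac},\infty}}\,\Delta x^{1/2}$, where $F_{\mathrm{ac},\infty}=\int_{\mathbb{R}}u'(z)^2dz$. -/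

import Mathlib

open MeasureTheory intervalIntegral

/-- The slope average `Du_2j` on the double cell `[x_{2j}, x_{2j+2}]`. -/
noncomputable def Du (u : ℝ → ℝ) (Δx : ℝ) (j : ℤ) : ℝ :=
  (u ((2*(j:ℝ)+2)*Δx) - u ((2*(j:ℝ))*Δx)) / (2*Δx)

/-- The quantity `q_2j = sqrt(DF_ac,2j - (Du_2j)^2)`. -/
noncomputable def qq (u u' : ℝ → ℝ) (Δx : ℝ) (j : ℤ) : ℝ :=
  Real.sqrt ((1/(2*Δx)) * (∫ z in ((2*(j:ℝ))*Δx)..((2*(j:ℝ)+2)*Δx), (u' z)^2)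
    - (Du u Δx j)^2)


lemma cs_aux (u' : ℝ → ℝ) (hu'sq : Integrable (fun z => (u' z)^2))
    (a b : ℝ) (hab : a ≤ b) :
    |∫ z in a..b, u' z| ≤ Real.sqrt (b - a) * Real.sqrt (∫ z, (u' z)^2) := by
  have hF : (0:ℝ) ≤ ∫ z, (u' z)^2 := integral_nonneg fun z => sq_nonneg _
  have hS : (∫ z in a..b, (u' z)^2) ≤ ∫ z, (u' z)^2 := by
    rw [intervalIntegral.integral_of_le hab]
    exact setIntegral_le_integral hu'sq (Filter.Eventually.of_forall fun z => sq_nonneg _)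
  have hS0 : (0:ℝ) ≤ ∫ z in a..b, (u' z)^2 :=
    intervalIntegral.integral_nonneg hab fun z _ => sq_nonneg _
  by_cases hint : IntervalIntegrable u' volume a b
  · rcases eq_or_lt_of_le hab with rfl | hlt
    · simp
    · set L : ℝ := b - a with hLdef
      have hL : 0 < L := by simp [hLdef]; linarith
      set I : ℝ := ∫ z in a..b, u' z with hIdef
      set S : ℝ := ∫ z in a..b, (u' z)^2 with hSdef
      have hsq : IntervalIntegrable (fun z => (u' z)^2) volume a b :=
        hu'sq.intervalIntegrable
      have hexp : (∫ z in a..b, (L * u' z - I)^2)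
          = L^2 * S - (2*L*I)*I + I^2 * L := by
        have h1 : (fun z => (L * u' z - I)^2)
            = fun z => L^2 * (u' z)^2 - (2*L*I) * (u' z) + I^2 := by
          funext z; ring
        rw [h1]
        rw [intervalIntegral.integral_add ((hsq.const_mul _).sub (hint.const_mul _))
            intervalIntegrable_const,
          intervalIntegral.integral_sub (hsq.const_mul _) (hint.const_mul _),
          intervalIntegral.integral_const_mul, intervalIntegral.integral_const_mul,
          intervalIntegral.integral_const]
        simp [smul_eq_mul, ← hIdef, ← hSdef, ← hLdef]
        ring
      have h0 : (0:ℝ) ≤ ∫ z in a..b, (L * u' z - I)^2 :=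
        intervalIntegral.integral_nonneg hab fun z _ => sq_nonneg _
      rw [hexp] at h0
      have key : I^2 ≤ L * S := by nlinarith
      calc |I| = Real.sqrt (I^2) := (Real.sqrt_sq_eq_abs I).symm
        _ ≤ Real.sqrt (L * S) := Real.sqrt_le_sqrt key
        _ = Real.sqrt L * Real.sqrt S := Real.sqrt_mul hL.le _
        _ ≤ Real.sqrt L * Real.sqrt (∫ z, (u' z)^2) := by
            exact mul_le_mul_of_nonneg_left (Real.sqrt_le_sqrt hS) (Real.sqrt_nonneg _)
  · rw [intervalIntegral.integral_undef hint]
    simp only [abs_zero]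
    positivity

lemma slope_bound (u u' : ℝ → ℝ) (Δx : ℝ) (hΔx : 0 < Δx)
    (hu : ∀ a b : ℝ, u b - u a = ∫ z in a..b, u' z)
    (hu'sq : Integrable (fun z => (u' z)^2)) (j : ℤ) (ε : ℝ) (hε : |ε| = 1) :
    |Du u Δx j + ε * qq u u' Δx j|
      ≤ Real.sqrt 2 * Real.sqrt (∫ z, (u' z)^2) / Real.sqrt Δx := by
  have hF : (0:ℝ) ≤ ∫ z, (u' z)^2 := integral_nonneg fun z => sq_nonneg _
  set F : ℝ := ∫ z, (u' z)^2 with hFdef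
  set a : ℝ := (2*(j:ℝ))*Δx
  set b : ℝ := (2*(j:ℝ)+2)*Δx
  have hab : a ≤ b := by simp only [a, b]; nlinarith
  have hba : b - a = 2*Δx := by simp only [a, b]; ring
  have h2Δ : (0:ℝ) < 2*Δx := by linarith
  have hScell : (∫ z in a..b, (u' z)^2) ≤ F := by
    rw [intervalIntegral.integral_of_le hab]
    exact setIntegral_le_integral hu'sq (Filter.Eventually.of_forall fun z => sq_nonneg _)
  have hScell0 : (0:ℝ) ≤ ∫ z in a..b, (u' z)^2 :=
    intervalIntegral.integral_nonneg hab fun z _ => sq_nonneg _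
  -- bound on Du
  have hDu : |Du u Δx j| ≤ Real.sqrt F / Real.sqrt (2*Δx) := by
    have h1 : |∫ z in a..b, u' z| ≤ Real.sqrt (2*Δx) * Real.sqrt F := by
      have := cs_aux u' hu'sq a b hab
      rwa [hba] at this
    have hDueq : Du u Δx j = (∫ z in a..b, u' z) / (2*Δx) := by
      rw [Du, hu]
    rw [hDueq, abs_div, abs_of_pos h2Δ, div_le_div_iff₀ h2Δ]
    · calc |∫ z in a..b, u' z| * Real.sqrt (2*Δx)
          ≤ (Real.sqrt (2*Δx) * Real.sqrt F) * Real.sqrt (2*Δx) :=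
            mul_le_mul_of_nonneg_right h1 (Real.sqrt_nonneg _)
        _ = Real.sqrt F * (2*Δx) := by
            rw [show Real.sqrt (2*Δx) * Real.sqrt F * Real.sqrt (2*Δx)
              = Real.sqrt F * (Real.sqrt (2*Δx) * Real.sqrt (2*Δx)) by ring,
              Real.mul_self_sqrt h2Δ.le]
    · exact Real.sqrt_pos.mpr h2Δ
  -- bound on qq
  have hq : |qq u u' Δx j| ≤ Real.sqrt F / Real.sqrt (2*Δx) := by
    rw [qq, abs_of_nonneg (Real.sqrt_nonneg _)]
    calc Real.sqrt ((1/(2*Δx)) * (∫ z in a..b, (u' z)^2) - (Du u Δx j)^2)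
        ≤ Real.sqrt ((1/(2*Δx)) * F) := by
          apply Real.sqrt_le_sqrt
          have := sq_nonneg (Du u Δx j)
          have h3 : (1/(2*Δx)) * (∫ z in a..b, (u' z)^2) ≤ (1/(2*Δx)) * F :=
            mul_le_mul_of_nonneg_left hScell (by positivity)
          linarith
      _ = Real.sqrt F / Real.sqrt (2*Δx) := by
          rw [Real.sqrt_mul (by positivity) F, one_div, Real.sqrt_inv]
          ring
  have habs : |Du u Δx j + ε * qq u u' Δx j| ≤ |Du u Δx j| + |qq u u' Δx j| := by
    calc |Du u Δx j + ε * qq u u' Δx j| ≤ |Du u Δx j| + |ε * qq u u' Δx j| := abs_add_le _ _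
      _ = |Du u Δx j| + |qq u u' Δx j| := by rw [abs_mul, hε, one_mul]
  have hfinal : |Du u Δx j| + |qq u u' Δx j| ≤ 2 * (Real.sqrt F / Real.sqrt (2*Δx)) := by
    linarith
  refine habs.trans (hfinal.trans (le_of_eq ?_))
  rw [Real.sqrt_mul (by norm_num : (0:ℝ) ≤ 2) Δx]
  have h2 : Real.sqrt 2 * Real.sqrt 2 = 2 := Real.mul_self_sqrt (by norm_num)
  have hs2 : (0:ℝ) < Real.sqrt 2 := by positivity
  have hsΔ : (0:ℝ) < Real.sqrt Δx := Real.sqrt_pos.mpr hΔx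
  field_simp
  linear_combination (-(Real.sqrt F)) * h2

lemma pointwise_bound (u u' : ℝ → ℝ) (Δx : ℝ) (hΔx : 0 < Δx)
    (hu : ∀ a b : ℝ, u b - u a = ∫ z in a..b, u' z)
    (hu'sq : Integrable (fun z => (u' z)^2))
    (a m x : ℝ) (hx : |x - a| ≤ Δx)
    (hm : |m| ≤ Real.sqrt 2 * Real.sqrt (∫ z, (u' z)^2) / Real.sqrt Δx) :
    |u x - (u a + m * (x - a))| ≤ (1 + Real.sqrt 2) * Real.sqrt (∫ z, (u' z)^2) * Real.sqrt Δx := by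
  have hF : (0:ℝ) ≤ ∫ z, (u' z)^2 := integral_nonneg fun z => sq_nonneg _
  set F : ℝ := ∫ z, (u' z)^2 with hFdef
  have h1 : u x - (u a + m*(x-a)) = (∫ z in a..x, u' z) - m*(x-a) := by
    rw [← hu a x]; ring
  rw [h1]
  have hxx := abs_le.mp hx
  have hInt : |∫ z in a..x, u' z| ≤ Real.sqrt Δx * Real.sqrt F := by
    rcases le_total a x with h | h
    · refine (cs_aux u' hu'sq a x h).trans ?_
      exact mul_le_mul_of_nonneg_right
        (Real.sqrt_le_sqrt (by linarith [hxx.2])) (Real.sqrt_nonneg _)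
    · rw [intervalIntegral.integral_symm, abs_neg]
      refine (cs_aux u' hu'sq x a h).trans ?_
      exact mul_le_mul_of_nonneg_right
        (Real.sqrt_le_sqrt (by linarith [hxx.1])) (Real.sqrt_nonneg _)
  have hm2 : |m * (x-a)| ≤ Real.sqrt 2 * Real.sqrt F * Real.sqrt Δx := by
    rw [abs_mul]
    calc |m| * |x-a| ≤ (Real.sqrt 2 * Real.sqrt F / Real.sqrt Δx) * Δx :=
          mul_le_mul hm hx (abs_nonneg _) (by positivity)
      _ = Real.sqrt 2 * Real.sqrt F * (Δx / Real.sqrt Δx) := by ring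
      _ = Real.sqrt 2 * Real.sqrt F * Real.sqrt Δx := by rw [Real.div_sqrt]
  calc |(∫ z in a..x, u' z) - m*(x-a)| ≤ |∫ z in a..x, u' z| + |m*(x-a)| := abs_sub _ _
    _ ≤ Real.sqrt Δx * Real.sqrt F + Real.sqrt 2 * Real.sqrt F * Real.sqrt Δx := by
        linarith
    _ = (1 + Real.sqrt 2) * Real.sqrt F * Real.sqrt Δx := by ring

/-- `L^∞`-error estimate for the piecewise linear projection `u_Δx`. -/
theorem stmt2 (u u' uD : ℝ → ℝ) (Δx : ℝ) (hΔx : 0 < Δx)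
    (hu : ∀ a b : ℝ, u b - u a = ∫ z in a..b, u' z)
    (hu'sq : Integrable (fun z => (u' z)^2))
    (s : ℤ → ℝ) (hs : ∀ j, s j = 1 ∨ s j = -1)
    (huD1 : ∀ j : ℤ, ∀ x ∈ Set.Icc ((2*(j:ℝ))*Δx) ((2*(j:ℝ)+1)*Δx),
      uD x = u ((2*(j:ℝ))*Δx) + (Du u Δx j - s j * qq u u' Δx j) * (x - (2*(j:ℝ))*Δx))
    (huD2 : ∀ j : ℤ, ∀ x ∈ Set.Icc ((2*(j:ℝ)+1)*Δx) ((2*(j:ℝ)+2)*Δx),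
      uD x = u ((2*(j:ℝ)+2)*Δx) + (Du u Δx j + s j * qq u u' Δx j) * (x - (2*(j:ℝ)+2)*Δx)) :
    ∀ x, |u x - uD x| ≤ (1 + Real.sqrt 2) * Real.sqrt (∫ z, (u' z)^2) * Real.sqrt Δx := by
  intro x
  set k : ℤ := ⌊x / Δx⌋ with hkdef
  have hk1 : (k:ℝ) * Δx ≤ x := by
    have := Int.floor_le (x / Δx)
    rw [← hkdef] at this
    calc (k:ℝ) * Δx ≤ (x/Δx) * Δx := mul_le_mul_of_nonneg_right this hΔx.le
      _ = x := by field_simp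
  have hk2 : x ≤ ((k:ℝ)+1) * Δx := by
    have := (Int.lt_floor_add_one (x / Δx)).le
    rw [← hkdef] at this
    calc x = (x/Δx) * Δx := by field_simp
      _ ≤ ((k:ℝ)+1) * Δx := mul_le_mul_of_nonneg_right this hΔx.le
  rcases Int.even_or_odd k with ⟨j, hj⟩ | ⟨j, hj⟩
  · -- k = j + j, first half-cell of double cell j
    have hkr : (k:ℝ) = 2*(j:ℝ) := by rw [hj]; push_cast; ring
    rw [hkr] at hk1 hk2
    have e1 : (2*(j:ℝ))*Δx ≤ x := hk1
    have e2 : x ≤ (2*(j:ℝ)+1)*Δx := hk2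
    rw [huD1 j x ⟨e1, e2⟩]
    have hε : |(-(s j))| = 1 := by rcases hs j with h | h <;> simp [h]
    have hm := slope_bound u u' Δx hΔx hu hu'sq j (-(s j)) hε
    rw [show Du u Δx j + (-(s j)) * qq u u' Δx j
        = Du u Δx j - s j * qq u u' Δx j by ring] at hm
    exact pointwise_bound u u' Δx hΔx hu hu'sq _ _ x
      (abs_le.mpr ⟨by nlinarith, by nlinarith⟩) hm
  · -- k = 2j+1, second half-cell
    have hkr : (k:ℝ) = 2*(j:ℝ)+1 := by rw [hj]; push_cast; ring
    rw [hkr] at hk1 hk2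
    have e1 : (2*(j:ℝ)+1)*Δx ≤ x := hk1
    have e2 : x ≤ (2*(j:ℝ)+2)*Δx := by nlinarith
    rw [huD2 j x ⟨e1, e2⟩]
    have hε : |s j| = 1 := by rcases hs j with h | h <;> simp [h]
    have hm := slope_bound u u' Δx hΔx hu hu'sq j (s j) hε
    exact pointwise_bound u u' Δx hΔx hu hu'sq _ _ x
      (abs_le.mpr ⟨by nlinarith, by nlinarith⟩) hm
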